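/- Let q be a positive integer and h a q-Weil polynomial of degree 6 that has a real root. If q is not a perfect square, then h(x) = (x^2 − q)^2 h_0(x) for some q-Weil polynomial h_0 of degree 2; if q is a perfect square, then h(x) = (x + √q)^{2k}(x − √q)^{2ℓ} h_1(x) where k, ℓ ≥ 0, k + ℓ ∈ {1, 2, 3}, and h_1 is a q-Weil polynomial of degree 6 − 2(k+ℓ) with no real roots (where a degree-0 polynomial means h_1 = 1). -/

import Mathlib

open Polynomial

/-- `h` is a `q`-Weil polynomial of degree `2*g`: its complex roots consist of
`g` conjugate pairs, each of complex absolute value `√q`. -/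
def IsWeil (q g : ℕ) (h : Polynomial ℤ) : Prop :=
  ∃ w : Fin g → ℂ,
    (∀ i, ‖w i‖ = Real.sqrt q) ∧
    h.map (Int.castRingHom ℂ) =
      ∏ i, ((Polynomial.X - Polynomial.C (w i)) *
            (Polynomial.X - Polynomial.C ((starRingEnd ℂ) (w i))))

lemma intMapInj : Function.Injective ⇑(Int.castRingHom ℂ) := fun a b hab => by
  simpa using hab

lemma dvd_of_complex_dvd {d h : Polynomial ℤ} (hd : d.Monic)
    (hdvd : d.map (Int.castRingHom ℂ) ∣ h.map (Int.castRingHom ℂ)) : d ∣ h :=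
  (Polynomial.map_dvd_map _ intMapInj hd).mp hdvd

lemma aeval_complex (h : Polynomial ℤ) (z : ℂ) :
    Polynomial.eval z (h.map (Int.castRingHom ℂ)) = Polynomial.aeval z h := by
  rw [aeval_def, eval₂_eq_eval_map]; norm_cast

lemma aeval_real_complex (h : Polynomial ℤ) (x : ℝ) (hx : Polynomial.aeval x h = 0) :
    Polynomial.eval (x : ℂ) (h.map (Int.castRingHom ℂ)) = 0 := by
  rw [aeval_complex]
  have : ((x : ℝ) : ℂ) = algebraMap ℝ ℂ x := rfl
  rw [this, Polynomial.aeval_algebraMap_apply, hx, map_zero]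

lemma sq_sub_dvd (q : ℕ) (h : Polynomial ℤ) (x : ℝ) (hx2 : x ^ 2 = q)
    (hxirr : Irrational x) (hroot : Polynomial.aeval x h = 0) :
    (X ^ 2 - C (q : ℤ)) ∣ h := by
  set d : Polynomial ℤ := X ^ 2 - C (q : ℤ) with hddef
  have hd : d.Monic := monic_X_pow_sub_C _ two_ne_zero
  rw [← Polynomial.modByMonic_eq_zero_iff_dvd hd]
  set r := h %ₘ d with hrdef
  have hrd : r.degree < d.degree := degree_modByMonic_lt h hd
  rw [hddef, degree_X_pow_sub_C (by norm_num)] at hrd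
  have hr1 : r.degree ≤ 1 := Order.le_of_lt_succ (by exact_mod_cast hrd)
  have hr : r = C (r.coeff 1) * X + C (r.coeff 0) := eq_X_add_C_of_degree_le_one hr1
  have hdiv := Polynomial.modByMonic_add_div h d
  have hev : Polynomial.aeval x r = 0 := by
    have h1 : Polynomial.aeval x d = 0 := by simp [hddef, hx2]
    have := congrArg (Polynomial.aeval x) hdiv
    rw [map_add, map_mul, h1, zero_mul, add_zero, hroot] at this
    exact this
  rw [hr] at hev
  simp only [map_add, map_mul, aeval_C, aeval_X, map_intCast, algebraMap_int_eq,
    eq_intCast] at hev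
  have hc1 : r.coeff 1 = 0 := by
    by_contra hc
    apply hxirr
    refine ⟨(-(r.coeff 0 : ℚ)) / (r.coeff 1 : ℚ), ?_⟩
    have hc' : (r.coeff 1 : ℝ) ≠ 0 := by exact_mod_cast hc
    push_cast
    field_simp
    linear_combination -hev
  rw [hc1] at hev
  simp only [Int.cast_zero, zero_mul, zero_add] at hev
  have hc0 : r.coeff 0 = 0 := by exact_mod_cast hev
  rw [hr, hc1, hc0]
  simp

lemma fin3_prod {M : Type*} [CommRing M] (f : Fin 3 → M) {i j : Fin 3} (hij : i ≠ j) :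
    ∃ m : Fin 3, m ≠ i ∧ m ≠ j ∧ ∏ t, f t = f i * f j * f m := by
  fin_cases i <;> fin_cases j <;>
  first
    | exact absurd rfl hij
    | exact ⟨0, by decide, by decide, by
        rw [Fin.prod_univ_three]; simp only [Fin.reduceFinMk, Fin.isValue]; try ring⟩
    | exact ⟨1, by decide, by decide, by
        rw [Fin.prod_univ_three]; simp only [Fin.reduceFinMk, Fin.isValue]; try ring⟩
    | exact ⟨2, by decide, by decide, by
        rw [Fin.prod_univ_three]; simp only [Fin.reduceFinMk, Fin.isValue]; try ring⟩

lemma prod_root_iff {ι : Type*} (s : Finset ι) (w : ι → ℂ) (z : ℂ) :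
    Polynomial.eval z (∏ i ∈ s, ((X - C (w i)) * (X - C ((starRingEnd ℂ) (w i))))) = 0 ↔
      ∃ i ∈ s, w i = z ∨ (starRingEnd ℂ) (w i) = z := by
  rw [Polynomial.eval_prod, Finset.prod_eq_zero_iff]
  simp only [eval_mul, eval_sub, eval_X, eval_C, mul_eq_zero, sub_eq_zero]
  exact exists_congr fun i => and_congr_right fun _ => or_congr eq_comm eq_comm

lemma real_root_index {g : ℕ} {w : Fin g → ℂ} {h : Polynomial ℤ}
    (hfac : h.map (Int.castRingHom ℂ) =
      ∏ i, ((X - C (w i)) * (X - C ((starRingEnd ℂ) (w i)))))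
    (z : ℝ) (hz : Polynomial.eval ((z : ℝ) : ℂ) (h.map (Int.castRingHom ℂ)) = 0) :
    ∃ i, w i = (z : ℂ) := by
  rw [hfac] at hz
  obtain ⟨i, -, hi⟩ := (prod_root_iff _ _ _).mp hz
  rcases hi with hi | hi
  · exact ⟨i, hi⟩
  · refine ⟨i, ?_⟩
    have := congrArg (starRingEnd ℂ) hi
    rwa [Complex.conj_conj, Complex.conj_ofReal] at this

theorem stmt19 (q : ℕ) (hq : 0 < q) (h : Polynomial ℤ) (hW : IsWeil q 3 h)
    (hrr : ∃ x : ℝ, Polynomial.aeval x h = 0) :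
    (¬ IsSquare q →
      ∃ h0 : Polynomial ℤ, IsWeil q 1 h0 ∧ h = (X ^ 2 - C (q : ℤ)) ^ 2 * h0) ∧
    (IsSquare q →
      ∃ s k l : ℕ, s ^ 2 = q ∧ 1 ≤ k + l ∧ k + l ≤ 3 ∧
        ∃ h1 : Polynomial ℤ, IsWeil q (3 - (k + l)) h1 ∧
          (¬ ∃ x : ℝ, Polynomial.aeval x h1 = 0) ∧
          h = (X + C (s : ℤ)) ^ (2 * k) * (X - C (s : ℤ)) ^ (2 * l) * h1) := by
  classical
  obtain ⟨w, habs, hfac⟩ := hW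
  obtain ⟨x, hx⟩ := hrr
  have hq0 : (0:ℝ) ≤ (q:ℝ) := Nat.cast_nonneg q
  have hqpos : (0:ℝ) < (q:ℝ) := by exact_mod_cast hq
  have hsqpos : 0 < Real.sqrt q := Real.sqrt_pos.mpr hqpos
  have hxz : Polynomial.eval ((x : ℝ) : ℂ) (h.map (Int.castRingHom ℂ)) = 0 :=
    aeval_real_complex h x hx
  have hxw : ∃ i, w i = (x : ℂ) := real_root_index hfac x hxz
  have hwabs : ∀ (i : Fin 3) (y : ℝ), w i = (y : ℂ) →
      y = Real.sqrt q ∨ y = -Real.sqrt q := by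
    intro i y hwi
    have h1 := habs i
    rw [hwi, Complex.norm_real, Real.norm_eq_abs] at h1
    exact (abs_eq (Real.sqrt_nonneg _)).mp h1
  obtain ⟨i0, hi0⟩ := hxw
  have hxpm : x = Real.sqrt q ∨ x = -Real.sqrt q := hwabs i0 x hi0
  constructor
  · -- non-square case
    intro hns
    have hirr : Irrational (Real.sqrt q) := irrational_sqrt_natCast_iff.mpr hns
    have hxirr : Irrational x := by
      rcases hxpm with h' | h' <;> rw [h']
      · exact hirr
      · exact hirr.neg
    have hx2 : x ^ 2 = (q:ℝ) := by
      rcases hxpm with h' | h' <;> rw [h']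
      · exact Real.sq_sqrt hq0
      · rw [neg_pow, Real.sq_sqrt hq0]; ring
    have hdvd1 : (X ^ 2 - C (q : ℤ)) ∣ h := sq_sub_dvd q h x hx2 hxirr hx
    set a : ℂ := ((Real.sqrt q : ℝ) : ℂ) with hadef
    have ha2 : a ^ 2 = (q : ℂ) := by
      rw [hadef, ← Complex.ofReal_pow, Real.sq_sqrt hq0]
      norm_cast
    have hzroot : ∀ z : ℂ, z ^ 2 = (q : ℂ) →
        Polynomial.eval z (h.map (Int.castRingHom ℂ)) = 0 := by
      intro z hz
      obtain ⟨g, hg⟩ := hdvd1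
      rw [hg, Polynomial.map_mul, eval_mul]
      have : (X ^ 2 - C (q : ℤ)).map (Int.castRingHom ℂ) = X ^ 2 - C (q : ℂ) := by
        simp [Polynomial.map_sub, Polynomial.map_pow]
      rw [this]
      simp [hz]
    have hia : ∃ i, w i = a :=
      real_root_index hfac (Real.sqrt q) (hzroot _ ha2)
    have hja : ∃ j, w j = -a := by
      have h1 : ((-Real.sqrt q : ℝ) : ℂ) = -a := by rw [hadef]; push_cast; ring
      have := real_root_index hfac (-Real.sqrt q) (by rw [h1]; apply hzroot; rw [neg_pow, ha2]; ring)
      rwa [h1] at this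
    obtain ⟨i, hi⟩ := hia
    obtain ⟨j, hj⟩ := hja
    have hij : i ≠ j := by
      intro hc
      rw [hc, hj] at hi
      have h2 : (2:ℂ) * a = 0 := by linear_combination - hi
      have ha0 : a = 0 := by
        rcases mul_eq_zero.mp h2 with h' | h'
        · exact absurd h' two_ne_zero
        · exact h'
      rw [hadef] at ha0
      exact absurd (Complex.ofReal_eq_zero.mp ha0) (ne_of_gt hsqpos)
    obtain ⟨m, hmi, hmj, hprod⟩ := fin3_prod
      (fun t => (X - C (w t)) * (X - C ((starRingEnd ℂ) (w t)))) hij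
    have hconja : (starRingEnd ℂ) a = a := Complex.conj_ofReal _
    have hconjna : (starRingEnd ℂ) (-a) = -a := by rw [map_neg, hconja]
    set d2 : Polynomial ℤ := (X ^ 2 - C (q : ℤ)) ^ 2 with hd2def
    have hd2m : d2.Monic := (monic_X_pow_sub_C _ two_ne_zero).pow _
    have hmapd2 : d2.map (Int.castRingHom ℂ) =
        ((X - C (w i)) * (X - C ((starRingEnd ℂ) (w i)))) *
        ((X - C (w j)) * (X - C ((starRingEnd ℂ) (w j)))) := by
      rw [hi, hj, hconja, hconjna]
      have h1 : d2.map (Int.castRingHom ℂ) = (X ^ 2 - C (q : ℂ)) ^ 2 := by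
        simp [hd2def, Polynomial.map_sub, Polynomial.map_pow]
      rw [h1, ← ha2]
      have h2 : C (a ^ 2) = (C a : Polynomial ℂ) ^ 2 := by rw [map_pow]
      rw [h2, show (C (-a) : Polynomial ℂ) = -C a from map_neg C a]; ring
    have hmap_h : h.map (Int.castRingHom ℂ) = d2.map (Int.castRingHom ℂ) *
        ((X - C (w m)) * (X - C ((starRingEnd ℂ) (w m)))) := by
      rw [hfac, hprod, hmapd2]; try ring
    have hdvd2 : d2 ∣ h := dvd_of_complex_dvd hd2m ⟨_, hmap_h⟩
    obtain ⟨h0, hh0⟩ := hdvd2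
    have hmaph0 : h0.map (Int.castRingHom ℂ) =
        (X - C (w m)) * (X - C ((starRingEnd ℂ) (w m))) := by
      have h1 := congrArg (Polynomial.map (Int.castRingHom ℂ)) hh0
      rw [Polynomial.map_mul] at h1
      exact mul_left_cancel₀ (hd2m.map _).ne_zero (by rw [← h1, hmap_h])
    exact ⟨h0, ⟨fun _ => w m, fun _ => habs m, by rw [hmaph0, Fin.prod_univ_one]⟩, hh0⟩
  · -- square case
    intro hsq
    obtain ⟨s, hs⟩ := hsq
    have hs2 : s ^ 2 = q := by rw [hs]; ring
    have hsne : s ≠ 0 := by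
      intro h0; rw [h0] at hs2; simp at hs2; omega
    have hsr : Real.sqrt q = s := by
      rw [← hs2]; push_cast; exact Real.sqrt_sq (Nat.cast_nonneg s)
    set sC : ℂ := (s : ℂ) with hsCdef
    have hsCne0 : sC ≠ 0 := by
      rw [hsCdef]; exact_mod_cast hsne
    have hconjs : (starRingEnd ℂ) sC = sC := by rw [hsCdef]; exact map_natCast _ _
    have hconjns : (starRingEnd ℂ) (-sC) = -sC := by rw [map_neg, hconjs]
    set F : Fin 3 → Polynomial ℂ :=
      fun t => (X - C (w t)) * (X - C ((starRingEnd ℂ) (w t))) with hFdef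
    have hfacF : h.map (Int.castRingHom ℂ) = ∏ t, F t := hfac
    set A := Finset.univ.filter (fun i : Fin 3 => w i = -sC) with hAdef
    set Br := Finset.univ.filter (fun i : Fin 3 => ¬ w i = -sC) with hBrdef
    set B := Br.filter (fun i => w i = sC) with hBdef
    set T := Br.filter (fun i => ¬ w i = sC) with hTdef
    have hc1 : A.card + Br.card = 3 := by
      rw [hAdef, hBrdef, Finset.card_filter_add_card_filter_not]
      simp
    have hc2 : B.card + T.card = Br.card :=
      Finset.card_filter_add_card_filter_not _
    have hkl3 : A.card + B.card ≤ 3 := by omega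
    have hTcard : T.card = 3 - (A.card + B.card) := by omega
    have hsCneg : sC ≠ -sC := by
      intro hcc
      have h2 : (2:ℂ) * sC = 0 := by linear_combination hcc
      rcases mul_eq_zero.mp h2 with h' | h'
      · exact two_ne_zero h'
      · exact hsCne0 h'
    have hklpos : 1 ≤ A.card + B.card := by
      rcases hxpm with h' | h'
      · have hww : w i0 = sC := by
          rw [hi0, h', hsr, hsCdef]; push_cast; rfl
        have hi0B : i0 ∈ B := by
          rw [hBdef, hBrdef]
          simp only [Finset.mem_filter, Finset.mem_univ, true_and]
          refine ⟨?_, hww⟩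
          rw [hww]; exact hsCneg
        have := Finset.card_pos.mpr ⟨i0, hi0B⟩
        omega
      · have hww : w i0 = -sC := by
          rw [hi0, h', hsr, hsCdef]; push_cast; ring
        have hi0A : i0 ∈ A := by
          rw [hAdef]
          simp only [Finset.mem_filter, Finset.mem_univ, true_and]
          exact hww
        have := Finset.card_pos.mpr ⟨i0, hi0A⟩
        omega
    have hpf1 : (∏ t ∈ A, F t) * (∏ t ∈ Br, F t) = ∏ t, F t := by
      rw [hAdef, hBrdef]
      exact Finset.prod_filter_mul_prod_filter_not _ _ _
    have hpf2 : (∏ t ∈ B, F t) * (∏ t ∈ T, F t) = ∏ t ∈ Br, F t := by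
      rw [hBdef, hTdef]
      exact Finset.prod_filter_mul_prod_filter_not _ _ _
    have hpA : ∏ t ∈ A, F t = ((X + C sC) * (X + C sC)) ^ A.card := by
      have hcong : ∀ t ∈ A, F t = (X + C sC) * (X + C sC) := by
        intro t ht
        rw [hAdef, Finset.mem_filter] at ht
        rw [hFdef]
        simp only
        rw [ht.2, hconjns, map_neg, sub_neg_eq_add]
      rw [Finset.prod_congr rfl hcong, Finset.prod_const]
    have hpB : ∏ t ∈ B, F t = ((X - C sC) * (X - C sC)) ^ B.card := by
      have hcong : ∀ t ∈ B, F t = (X - C sC) * (X - C sC) := by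
        intro t ht
        rw [hBdef, Finset.mem_filter] at ht
        rw [hFdef]
        simp only
        rw [ht.2, hconjs]
      rw [Finset.prod_congr rfl hcong, Finset.prod_const]
    set d : Polynomial ℤ :=
      (X + C (s : ℤ)) ^ (2 * A.card) * (X - C (s : ℤ)) ^ (2 * B.card) with hddef
    have hdm : d.Monic := ((monic_X_add_C _).pow _).mul ((monic_X_sub_C _).pow _)
    have hmapd : d.map (Int.castRingHom ℂ) =
        (X + C sC) ^ (2 * A.card) * (X - C sC) ^ (2 * B.card) := by
      rw [hddef]
      simp [Polynomial.map_mul, Polynomial.map_pow, Polynomial.map_add,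
        Polynomial.map_sub, hsCdef]
    have hmaph : h.map (Int.castRingHom ℂ) =
        d.map (Int.castRingHom ℂ) * ∏ t ∈ T, F t := by
      rw [hfacF, ← hpf1, ← hpf2, hpA, hpB, hmapd, pow_mul, pow_mul]
      ring
    have hdvd : d ∣ h := dvd_of_complex_dvd hdm ⟨_, hmaph⟩
    obtain ⟨h1, hh1⟩ := hdvd
    have hmaph1 : h1.map (Int.castRingHom ℂ) = ∏ t ∈ T, F t := by
      have hcg := congrArg (Polynomial.map (Int.castRingHom ℂ)) hh1
      rw [Polynomial.map_mul] at hcg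
      exact mul_left_cancel₀ (hdm.map _).ne_zero (by rw [← hcg, hmaph])
    refine ⟨s, A.card, B.card, hs2, hklpos, hkl3, h1, ?_, ?_, by rw [hh1, hddef]⟩
    · -- IsWeil
      have e := T.equivFin
      refine ⟨fun n => w ((e.symm (finCongr hTcard.symm n)) : Fin 3),
        fun n => habs _, ?_⟩
      rw [hmaph1]
      refine ((Fintype.prod_equiv ((finCongr hTcard.symm).trans e.symm)
        _ (fun t : {x // x ∈ T} => F ↑t) (fun n => rfl)).trans
        (Finset.prod_coe_sort T F)).symm
    · -- no real root
      rintro ⟨y, hy⟩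
      have hyz := aeval_real_complex h1 y hy
      rw [hmaph1] at hyz
      have hyz' : ∃ t ∈ T, w t = (y : ℂ) ∨ (starRingEnd ℂ) (w t) = (y : ℂ) :=
        (prod_root_iff T w ((y : ℝ) : ℂ)).mp hyz
      obtain ⟨t, htT, hcase⟩ := hyz'
      have hwt : w t = (y : ℂ) := by
        rcases hcase with hc | hc
        · exact hc
        · have := congrArg (starRingEnd ℂ) hc
          rwa [Complex.conj_conj, Complex.conj_ofReal] at this
      rw [hTdef, hBrdef] at htT
      simp only [Finset.mem_filter, Finset.mem_univ, true_and] at htT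
      rcases hwabs t y hwt with h' | h'
      · apply htT.2
        rw [hwt, h', hsr, hsCdef]; push_cast; rfl
      · apply htT.1
        rw [hwt, h', hsr, hsCdef]; push_cast; ring
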